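/- Let Q₁ be an m₁-inverse quasigroup with permutation J₁ such that J₁^{h₁} ∈ Aut(Q₁), and Q₂ an m₂-inverse quasigroup with permutation J₂ such that J₂^{h₂} ∈ Aut(Q₂). If m ∈ ℤ satisfies m ≡ m₁ (mod h₁) and m ≡ m₂ (mod h₂), then the direct product Q₁ × Q₂ (with componentwise multiplication) is an m-inverse quasigroup with permutation J₁ × J₂. -/

import Mathlib

private lemma hom_zpow_mul {Q : Type*} [Mul Q] (J : Equiv.Perm Q) (h : ℤ)
    (ha : ∀ x y : Q, (J ^ h) (x * y) = (J ^ h) x * (J ^ h) y) :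
    ∀ (k : ℤ) (x y : Q), (J ^ (h * k)) (x * y) = (J ^ (h * k)) x * (J ^ (h * k)) y := by
  have hneg : ∀ x y : Q, (J ^ (-h)) (x * y) = (J ^ (-h)) x * (J ^ (-h)) y := by
    intro x y
    have h1 : (J ^ h) ((J ^ (-h)) x * (J ^ (-h)) y) = x * y := by
      rw [ha]
      simp [← Equiv.Perm.mul_apply, ← zpow_add, -Equiv.Perm.coe_mul, Equiv.Perm.mul_symm]
    have := congrArg (J ^ (-h)) h1
    simpa [← Equiv.Perm.mul_apply, ← zpow_add] using this.symm
  intro k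
  induction k using Int.induction_on with
  | zero => simp
  | succ n ih =>
    intro x y
    have : h * (n + 1 : ℤ) = h + h * n := by ring
    rw [this, zpow_add]
    simp only [Equiv.Perm.mul_apply]
    rw [ih, ha]
  | pred n ih =>
    intro x y
    have : h * (-n - 1 : ℤ) = -h + h * (-n) := by ring
    rw [this, zpow_add]
    simp only [Equiv.Perm.mul_apply]
    rw [ih, hneg]

private lemma minv_shift {Q : Type*} [Mul Q] (J : Equiv.Perm Q) (m₁ h m : ℤ)
    (hi : ∀ x y : Q, (J ^ m₁) (x * y) * (J ^ (m₁ + 1)) x = (J ^ m₁) y)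
    (ha : ∀ x y : Q, (J ^ h) (x * y) = (J ^ h) x * (J ^ h) y)
    (hc : m ≡ m₁ [ZMOD h]) :
    ∀ x y : Q, (J ^ m) (x * y) * (J ^ (m + 1)) x = (J ^ m) y := by
  obtain ⟨k, hk⟩ := hc.symm.dvd
  have hm : m = m₁ + h * k := by linarith
  intro x y
  have hhom := hom_zpow_mul J h ha k
  rw [hm, show m₁ + h * k + 1 = (m₁ + 1) + h * k by ring, zpow_add, zpow_add]
  simp only [Equiv.Perm.mul_apply]
  rw [show (J ^ m₁) ((J ^ (h*k)) (x*y)) = (J ^ (h*k)) ((J ^ m₁) (x*y)) from by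
        simp [← Equiv.Perm.mul_apply, ← zpow_add, add_comm],
      show (J ^ (m₁+1)) ((J ^ (h*k)) x) = (J ^ (h*k)) ((J ^ (m₁+1)) x) from by
        simp [← Equiv.Perm.mul_apply, ← zpow_add, add_comm],
      ← hhom, hi]
  simp [← Equiv.Perm.mul_apply, ← zpow_add, add_comm]

private lemma prodCongr_zpow {Q₁ Q₂ : Type*} (J₁ : Equiv.Perm Q₁) (J₂ : Equiv.Perm Q₂)
    (m : ℤ) : (J₁.prodCongr J₂) ^ m = (J₁ ^ m).prodCongr (J₂ ^ m) := by
  have hn : ∀ n : ℕ, (J₁.prodCongr J₂) ^ n = (J₁ ^ n).prodCongr (J₂ ^ n) := by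
    intro n
    induction n with
    | zero => ext p <;> simp
    | succ n ih =>
      rw [pow_succ, pow_succ, pow_succ, ih]
      ext p <;> simp
  obtain (n | n) := m
  · simpa using hn n
  · rw [zpow_negSucc, zpow_negSucc, zpow_negSucc, hn,
      Equiv.Perm.inv_def, Equiv.Perm.inv_def, Equiv.Perm.inv_def, Equiv.prodCongr_symm]

theorem stmt_7 {Q₁ Q₂ : Type*} [Mul Q₁] [Mul Q₂]
    (hq₁₁ : ∀ a b : Q₁, ∃! x : Q₁, a * x = b)
    (hq₁₂ : ∀ a b : Q₁, ∃! y : Q₁, y * a = b)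
    (hq₂₁ : ∀ a b : Q₂, ∃! x : Q₂, a * x = b)
    (hq₂₂ : ∀ a b : Q₂, ∃! y : Q₂, y * a = b)
    (J₁ : Equiv.Perm Q₁) (J₂ : Equiv.Perm Q₂) (m₁ m₂ h₁ h₂ m : ℤ)
    (hi₁ : ∀ x y : Q₁, (J₁ ^ m₁) (x * y) * (J₁ ^ (m₁ + 1)) x = (J₁ ^ m₁) y)
    (hi₂ : ∀ x y : Q₂, (J₂ ^ m₂) (x * y) * (J₂ ^ (m₂ + 1)) x = (J₂ ^ m₂) y)
    (ha₁ : ∀ x y : Q₁, (J₁ ^ h₁) (x * y) = (J₁ ^ h₁) x * (J₁ ^ h₁) y)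
    (ha₂ : ∀ x y : Q₂, (J₂ ^ h₂) (x * y) = (J₂ ^ h₂) x * (J₂ ^ h₂) y)
    (hc₁ : m ≡ m₁ [ZMOD h₁]) (hc₂ : m ≡ m₂ [ZMOD h₂]) :
    ∀ p q : Q₁ × Q₂,
      ((J₁.prodCongr J₂) ^ m) (p * q) * ((J₁.prodCongr J₂) ^ (m + 1)) p =
        ((J₁.prodCongr J₂) ^ m) q := by
  intro p q
  rw [prodCongr_zpow, prodCongr_zpow]
  have e₁ := minv_shift J₁ m₁ h₁ m hi₁ ha₁ hc₁ p.1 q.1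
  have e₂ := minv_shift J₂ m₂ h₂ m hi₂ ha₂ hc₂ p.2 q.2
  exact Prod.ext e₁ e₂
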